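/- For p = 1, the transport–transform distance τ(ξ,η) between finite point patterns ξ and η equals the minimum total cost over all finite sequences of elementary operations transforming ξ into η, where each elementary operation either adds a point (cost C), deletes a point (cost C), or moves a point from location x to location y (cost d(x,y)). -/
import Mathlib


/-- `p`-th power of the transport-transform distance between finite point patterns. -/
noncomputable def ttP {X : Type*} [MetricSpace X] (C p : ℝ) (ξ η : Multiset X) : ℝ :=
  sInf { c : ℝ | ∃ γ : Multiset (X × X),
    γ.map Prod.fst ≤ ξ ∧ γ.map Prod.snd ≤ η ∧
    c = ((Multiset.card ξ : ℝ) + Multiset.card η - 2 * Multiset.card γ) * C ^ p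
        + (γ.map (fun z => dist z.1 z.2 ^ p)).sum }

/-- The transport-transform (TT) distance `τ_{C,p}`. -/
noncomputable def ttDist {X : Type*} [MetricSpace X] (C p : ℝ) (ξ η : Multiset X) : ℝ :=
  ttP C p ξ η ^ (1 / p)

/-- An elementary operation transforming `ξ` into `η` at cost `c`: add a point (cost `C`),
delete a point (cost `C`), or move a point from `x` to `y` (cost `d(x,y)`). -/
def elemStep {X : Type*} [MetricSpace X] (C : ℝ) (ξ η : Multiset X) (c : ℝ) : Prop :=
  (∃ y, η = y ::ₘ ξ ∧ c = C) ∨ (∃ x, ξ = x ::ₘ η ∧ c = C) ∨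
  (∃ x y ρ, ξ = x ::ₘ ρ ∧ η = y ::ₘ ρ ∧ c = dist x y)

namespace TTAux

open scoped Classical

variable {X : Type*} [MetricSpace X]

/-- The set of total costs of chains of elementary steps from `ξ` to `η`. -/
def chainSet (C : ℝ) (ξ η : Multiset X) : Set ℝ :=
  { c : ℝ | ∃ (N : ℕ) (f : Fin (N + 1) → Multiset X) (w : Fin N → ℝ),
      f 0 = ξ ∧ f (Fin.last N) = η ∧
      (∀ i : Fin N, elemStep C (f i.castSucc) (f i.succ) (w i)) ∧
      c = ∑ i, w i }

/-- Cost of a partial matching `γ` between `ξ` and `η` (for `p = 1`). -/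
noncomputable def mCost (C : ℝ) (ξ η : Multiset X) (γ : Multiset (X × X)) : ℝ :=
  ((Multiset.card ξ : ℝ) + Multiset.card η - 2 * Multiset.card γ) * C
    + (γ.map (fun z => dist z.1 z.2)).sum

lemma chain_refl (C : ℝ) (ξ : Multiset X) : (0 : ℝ) ∈ chainSet C ξ ξ :=
  ⟨0, fun _ => ξ, fun _ => 0, rfl, rfl, fun i => i.elim0, by simp⟩

lemma chain_prepend {C c b : ℝ} {ξ ρ η : Multiset X}
    (hs : elemStep C ξ ρ c) (hb : b ∈ chainSet C ρ η) :
    c + b ∈ chainSet C ξ η := by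
  obtain ⟨N, f, w, h0, hl, hstep, hsum⟩ := hb
  refine ⟨N + 1, Fin.cons ξ f, Fin.cons c w, by simp, ?_, ?_, ?_⟩
  · rw [show Fin.last (N + 1) = (Fin.last N).succ from rfl, Fin.cons_succ]
    exact hl
  · intro i
    refine Fin.cases ?_ ?_ i
    · simpa [h0] using hs
    · intro j
      simpa [← Fin.succ_castSucc] using hstep j
  · rw [hsum, Fin.sum_cons]

lemma elemStep_cons {C c : ℝ} {s t : Multiset X} (a : X) (h : elemStep C s t c) :
    elemStep C (a ::ₘ s) (a ::ₘ t) c := by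
  rcases h with ⟨y, rfl, rfl⟩ | ⟨x, rfl, rfl⟩ | ⟨x, y, ρ, rfl, rfl, rfl⟩
  · exact Or.inl ⟨y, by rw [Multiset.cons_swap], rfl⟩
  · exact Or.inr (Or.inl ⟨x, by rw [Multiset.cons_swap], rfl⟩)
  · exact Or.inr (Or.inr ⟨x, y, a ::ₘ ρ, by rw [Multiset.cons_swap],
      by rw [Multiset.cons_swap], rfl⟩)

lemma chain_cons {C b : ℝ} {ξ η : Multiset X} (a : X) (hb : b ∈ chainSet C ξ η) :
    b ∈ chainSet C (a ::ₘ ξ) (a ::ₘ η) := by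
  obtain ⟨N, f, w, h0, hl, hstep, hsum⟩ := hb
  exact ⟨N, fun i => a ::ₘ f i, w, by simp [h0], by simp [hl],
    fun i => elemStep_cons a (hstep i), hsum⟩

lemma chain_add_all (C : ℝ) (η : Multiset X) :
    ((Multiset.card η : ℝ) * C) ∈ chainSet C (0 : Multiset X) η := by
  induction η using Multiset.induction with
  | empty => simpa using chain_refl C 0
  | cons y η ih =>
      have h1 : elemStep C (0 : Multiset X) (y ::ₘ 0) C := Or.inl ⟨y, rfl, rfl⟩
      have h2 := chain_prepend h1 (chain_cons y ih)
      have heq : ((Multiset.card (y ::ₘ η) : ℝ)) * C = C + (Multiset.card η : ℝ) * C := by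
        rw [Multiset.card_cons]; push_cast; ring
      rw [heq]
      exact h2

lemma chain_del_all (C : ℝ) (ξ η : Multiset X) :
    (((Multiset.card ξ : ℝ) + Multiset.card η) * C) ∈ chainSet C ξ η := by
  induction ξ using Multiset.induction with
  | empty => simpa using chain_add_all C η
  | cons x ξ ih =>
      have h1 : elemStep C (x ::ₘ ξ) ξ C := Or.inr (Or.inl ⟨x, rfl, rfl⟩)
      have h2 := chain_prepend h1 ih
      have heq : ((Multiset.card (x ::ₘ ξ) : ℝ) + Multiset.card η) * C
          = C + ((Multiset.card ξ : ℝ) + Multiset.card η) * C := by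
        rw [Multiset.card_cons]; push_cast; ring
      rw [heq]
      exact h2

lemma chain_of_matching (C : ℝ) :
    ∀ (γ : Multiset (X × X)) (ξ η : Multiset X),
      γ.map Prod.fst ≤ ξ → γ.map Prod.snd ≤ η →
      mCost C ξ η γ ∈ chainSet C ξ η := by
  intro γ
  induction γ using Multiset.induction with
  | empty =>
      intro ξ η _ _
      have : mCost C ξ η 0 = ((Multiset.card ξ : ℝ) + Multiset.card η) * C := by
        simp [mCost]
      rw [this]
      exact chain_del_all C ξ η
  | cons z γ ih =>
      intro ξ η h1 h2
      rw [Multiset.map_cons] at h1 h2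
      have hx : z.1 ∈ ξ := Multiset.mem_of_le h1 (Multiset.mem_cons_self _ _)
      have hy : z.2 ∈ η := Multiset.mem_of_le h2 (Multiset.mem_cons_self _ _)
      obtain ⟨ξ', rfl⟩ : ∃ ξ', ξ = z.1 ::ₘ ξ' := ⟨ξ.erase z.1, (Multiset.cons_erase hx).symm⟩
      obtain ⟨η', rfl⟩ : ∃ η', η = z.2 ::ₘ η' := ⟨η.erase z.2, (Multiset.cons_erase hy).symm⟩
      rw [Multiset.cons_le_cons_iff] at h1 h2
      have hstep : elemStep C (z.1 ::ₘ ξ') (z.2 ::ₘ ξ') (dist z.1 z.2) :=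
        Or.inr (Or.inr ⟨z.1, z.2, ξ', rfl, rfl, rfl⟩)
      have h3 := chain_prepend hstep (chain_cons z.2 (ih ξ' η' h1 h2))
      have heq : mCost C (z.1 ::ₘ ξ') (z.2 ::ₘ η') (z ::ₘ γ)
          = dist z.1 z.2 + mCost C ξ' η' γ := by
        simp only [mCost, Multiset.card_cons, Multiset.map_cons, Multiset.sum_cons]
        push_cast; ring
      rw [heq]
      exact h3

lemma le_cons_cases {s ρ : Multiset X} {y : X} (h : s ≤ y ::ₘ ρ) :
    s ≤ ρ ∨ (y ∈ s ∧ s.erase y ≤ ρ) := by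
  by_cases hy : y ∈ s
  · right
    refine ⟨hy, ?_⟩
    simpa using Multiset.erase_le_erase y h
  · exact Or.inl ((Multiset.le_cons_of_notMem hy).mp h)

lemma matching_of_step {C c : ℝ} (hC : 0 < C) {ξ ξ' η : Multiset X} {γ' : Multiset (X × X)}
    (hs : elemStep C ξ ξ' c)
    (h1 : γ'.map Prod.fst ≤ ξ') (h2 : γ'.map Prod.snd ≤ η) :
    ∃ γ : Multiset (X × X), γ.map Prod.fst ≤ ξ ∧ γ.map Prod.snd ≤ η ∧
      mCost C ξ η γ ≤ c + mCost C ξ' η γ' := by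
  rcases hs with ⟨y, rfl, rfl⟩ | ⟨x, rfl, rfl⟩ | ⟨x, y, ρ, rfl, rfl, rfl⟩
  · -- add: ξ' = y ::ₘ ξ, cost C
    rcases le_cons_cases h1 with hle | ⟨hy, _⟩
    · refine ⟨γ', hle, h2, ?_⟩
      simp only [mCost, Multiset.card_cons]
      push_cast
      ring_nf
      nlinarith [hC]
    · obtain ⟨p, hp, hpy⟩ := Multiset.mem_map.mp hy
      refine ⟨γ'.erase p, ?_, ?_, ?_⟩
      · have hγ' : p ::ₘ γ'.erase p = γ' := Multiset.cons_erase hp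
        have : p.1 ::ₘ (γ'.erase p).map Prod.fst ≤ y ::ₘ ξ := by
          rw [← Multiset.map_cons, hγ']; exact h1
        rw [hpy] at this
        exact (Multiset.cons_le_cons_iff y).mp this
      · exact le_trans (Multiset.map_le_map (Multiset.erase_le p γ')) h2
      · have hγ' : p ::ₘ γ'.erase p = γ' := Multiset.cons_erase hp
        have hcard : (Multiset.card γ' : ℝ) = Multiset.card (γ'.erase p) + 1 := by
          conv_lhs => rw [← hγ']
          rw [Multiset.card_cons]; push_cast; ring
        have hsum : (γ'.map fun z => dist z.1 z.2).sum
            = dist p.1 p.2 + ((γ'.erase p).map fun z => dist z.1 z.2).sum := by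
          conv_lhs => rw [← hγ']
          rw [Multiset.map_cons, Multiset.sum_cons]
        simp only [mCost, Multiset.card_cons, hsum, hcard]
        have := dist_nonneg (x := p.1) (y := p.2)
        push_cast
        nlinarith [hC]
  · -- delete: ξ = x ::ₘ ξ'
    refine ⟨γ', le_trans h1 (Multiset.le_cons_self _ _), h2, ?_⟩
    simp only [mCost, Multiset.card_cons]
    push_cast
    ring_nf
    nlinarith [hC]
  · -- move: ξ = x ::ₘ ρ, ξ' = y ::ₘ ρ
    rcases le_cons_cases h1 with hle | ⟨hy, _⟩
    · refine ⟨γ', le_trans hle (Multiset.le_cons_self _ _), h2, ?_⟩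
      simp only [mCost, Multiset.card_cons]
      have := dist_nonneg (x := x) (y := y)
      push_cast
      nlinarith
    · obtain ⟨p, hp, hpy⟩ := Multiset.mem_map.mp hy
      have hγ' : p ::ₘ γ'.erase p = γ' := Multiset.cons_erase hp
      refine ⟨(x, p.2) ::ₘ γ'.erase p, ?_, ?_, ?_⟩
      · have : p.1 ::ₘ (γ'.erase p).map Prod.fst ≤ y ::ₘ ρ := by
          rw [← Multiset.map_cons, hγ']; exact h1
        rw [hpy] at this
        rw [Multiset.map_cons]
        exact Multiset.cons_le_cons x ((Multiset.cons_le_cons_iff y).mp this)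
      · have : ((x, p.2) ::ₘ γ'.erase p).map Prod.snd = γ'.map Prod.snd := by
          conv_rhs => rw [← hγ', Multiset.map_cons]
          rw [Multiset.map_cons]
        rw [this]
        exact h2
      · have hcard : (Multiset.card γ' : ℝ) = Multiset.card (γ'.erase p) + 1 := by
          conv_lhs => rw [← hγ']
          rw [Multiset.card_cons]; push_cast; ring
        have hsum : (γ'.map fun z => dist z.1 z.2).sum
            = dist p.1 p.2 + ((γ'.erase p).map fun z => dist z.1 z.2).sum := by
          conv_lhs => rw [← hγ']
          rw [Multiset.map_cons, Multiset.sum_cons]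
        have htri : dist x p.2 ≤ dist x p.1 + dist p.1 p.2 := dist_triangle x p.1 p.2
        rw [← hpy]
        simp only [mCost, Multiset.card_cons, Multiset.map_cons, Multiset.sum_cons, hsum, hcard]
        push_cast
        nlinarith
    
lemma matching_of_chain {C : ℝ} (hC : 0 < C) :
    ∀ (N : ℕ) (f : Fin (N + 1) → Multiset X) (w : Fin N → ℝ) (η : Multiset X),
      f (Fin.last N) = η →
      (∀ i : Fin N, elemStep C (f i.castSucc) (f i.succ) (w i)) →
      ∃ γ : Multiset (X × X), γ.map Prod.fst ≤ f 0 ∧ γ.map Prod.snd ≤ η ∧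
        mCost C (f 0) η γ ≤ ∑ i, w i := by
  intro N
  induction N with
  | zero =>
      intro f w η hl _
      have hfη : f 0 = η := by rw [← hl]; rfl
      subst hfη
      refine ⟨(f 0).map (fun x => (x, x)), ?_, ?_, ?_⟩
      · simp [Multiset.map_map]
      · simp [Multiset.map_map]
      · have hm : ((((f 0).map fun x => (x, x)).map fun z => dist z.1 z.2)).sum = 0 := by
          rw [Multiset.map_map]
          simp [Function.comp, dist_self]
        have : mCost C (f 0) (f 0) ((f 0).map (fun x => (x, x))) = 0 := by
          simp only [mCost, Multiset.card_map, hm]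
          ring
        rw [this]
        simp
  | succ N ih =>
      intro f w η hl hstep
      have hstep' : ∀ i : Fin N, elemStep C ((f ∘ Fin.succ) i.castSucc)
          ((f ∘ Fin.succ) i.succ) (w i.succ) := by
        intro i
        have := hstep i.succ
        simpa [Function.comp, ← Fin.succ_castSucc] using this
      have hl' : (f ∘ Fin.succ) (Fin.last N) = η := by
        rw [Function.comp_apply, Fin.succ_last]
        exact hl
      obtain ⟨γ', hγ1, hγ2, hγ3⟩ := ih (f ∘ Fin.succ) (fun i => w i.succ) η hl' hstep'
      have h0 : elemStep C (f 0) (f (Fin.succ 0)) (w 0) := by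
        have := hstep 0
        simpa using this
      have hfc : (f ∘ Fin.succ) 0 = f (Fin.succ 0) := rfl
      rw [hfc] at hγ1 hγ3
      obtain ⟨γ, hg1, hg2, hg3⟩ := matching_of_step hC h0 hγ1 hγ2
      refine ⟨γ, hg1, hg2, ?_⟩
      rw [Fin.sum_univ_succ]
      have : mCost C (f (Fin.succ 0)) η γ' ≤ ∑ i : Fin N, w i.succ := hγ3
      linarith

lemma elemStep_nonneg {C c : ℝ} (hC : 0 < C) {s t : Multiset X}
    (h : elemStep C s t c) : 0 ≤ c := by
  rcases h with ⟨y, _, rfl⟩ | ⟨x, _, rfl⟩ | ⟨x, y, ρ, _, _, rfl⟩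
  · exact le_of_lt hC
  · exact le_of_lt hC
  · exact dist_nonneg

lemma mCost_nonneg {C : ℝ} (hC : 0 < C) {ξ η : Multiset X} {γ : Multiset (X × X)}
    (h1 : γ.map Prod.fst ≤ ξ) (h2 : γ.map Prod.snd ≤ η) :
    0 ≤ mCost C ξ η γ := by
  have hc1 : Multiset.card γ ≤ Multiset.card ξ := by
    simpa using Multiset.card_le_card h1
  have hc2 : Multiset.card γ ≤ Multiset.card η := by
    simpa using Multiset.card_le_card h2
  have hsum : 0 ≤ (γ.map fun z => dist z.1 z.2).sum := by
    apply Multiset.sum_nonneg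
    intro x hx
    obtain ⟨z, _, rfl⟩ := Multiset.mem_map.mp hx
    exact dist_nonneg
  have hcoef : (0 : ℝ) ≤ (Multiset.card ξ : ℝ) + Multiset.card η - 2 * Multiset.card γ := by
    have h1' : (Multiset.card γ : ℝ) ≤ Multiset.card ξ := by exact_mod_cast hc1
    have h2' : (Multiset.card γ : ℝ) ≤ Multiset.card η := by exact_mod_cast hc2
    linarith
  have := mul_nonneg hcoef (le_of_lt hC)
  simp only [mCost]
  linarith

end TTAux

/-- For `p = 1`, the TT-distance equals the minimal total cost over all finite sequences of
elementary add/delete/move operations transforming `ξ` into `η` (the spike time metric). -/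
theorem stmt5 {X : Type*} [MetricSpace X] (C : ℝ) (hC : 0 < C) (ξ η : Multiset X) :
    ttDist C 1 ξ η =
    sInf { c : ℝ | ∃ (N : ℕ) (f : Fin (N + 1) → Multiset X) (w : Fin N → ℝ),
      f 0 = ξ ∧ f (Fin.last N) = η ∧
      (∀ i : Fin N, elemStep C (f i.castSucc) (f i.succ) (w i)) ∧
      c = ∑ i, w i } := by
  classical
  have hA : ttDist C 1 ξ η
      = sInf { c : ℝ | ∃ γ : Multiset (X × X),
          γ.map Prod.fst ≤ ξ ∧ γ.map Prod.snd ≤ η ∧ c = TTAux.mCost C ξ η γ } := by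
    have h1 : ttDist C 1 ξ η = ttP C 1 ξ η := by
      rw [ttDist]
      norm_num
    rw [h1, ttP]
    congr 1
    ext c
    simp only [Set.mem_setOf_eq, TTAux.mCost, Real.rpow_one]
  rw [hA]
  set A := { c : ℝ | ∃ γ : Multiset (X × X),
      γ.map Prod.fst ≤ ξ ∧ γ.map Prod.snd ≤ η ∧ c = TTAux.mCost C ξ η γ } with hAdef
  set B := { c : ℝ | ∃ (N : ℕ) (f : Fin (N + 1) → Multiset X) (w : Fin N → ℝ),
      f 0 = ξ ∧ f (Fin.last N) = η ∧
      (∀ i : Fin N, elemStep C (f i.castSucc) (f i.succ) (w i)) ∧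
      c = ∑ i, w i } with hBdef
  have hBchain : B = TTAux.chainSet C ξ η := rfl
  have hAsub : A ⊆ B := by
    rintro c ⟨γ, h1, h2, rfl⟩
    rw [hBchain]
    exact TTAux.chain_of_matching C γ ξ η h1 h2
  have hAne : A.Nonempty := by
    refine ⟨TTAux.mCost C ξ η 0, 0, ?_, ?_, rfl⟩ <;> simp
  have hBne : B.Nonempty := ⟨_, hAsub hAne.choose_spec⟩
  have hAbdd : BddBelow A := by
    refine ⟨0, ?_⟩
    rintro c ⟨γ, h1, h2, rfl⟩
    exact TTAux.mCost_nonneg hC h1 h2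
  have hBbdd : BddBelow B := by
    refine ⟨0, ?_⟩
    rintro c ⟨N, f, w, _, _, hstep, rfl⟩
    exact Finset.sum_nonneg fun i _ => TTAux.elemStep_nonneg hC (hstep i)
  apply le_antisymm
  · apply le_csInf hBne
    rintro b ⟨N, f, w, h0, hl, hstep, rfl⟩
    obtain ⟨γ, hg1, hg2, hg3⟩ := TTAux.matching_of_chain hC N f w η hl hstep
    rw [h0] at hg1 hg3
    exact le_trans (csInf_le hAbdd ⟨γ, hg1, hg2, rfl⟩) hg3
  · exact csInf_le_csInf hBbdd hAne hAsub
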